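/- Let k, l, m ∈ ℕ with m ≥ 1, and let A, B, C, D be ℝ-valued continuously differentiable functions on a connected open set Ξ ⊂ ℝ²_+ = {(x_1,x_2) : x_2 > 0} satisfying simultaneously the left system ∂_{x_0}A − r∂_r B = (2k+m)B + (−1)^{l+1}(2l−m)C; ∂_{x_0}B + (1/r)∂_r A = (−1)^l(2l−m)D; ∂_{x_0}C − r∂_r D = (2k+m+2)D; ∂_{x_0}D + (1/r)∂_r C = 0, and the right system ∂_{x_0}A − r∂_r C = (2k+m)C + (−1)^{l+1}(2l−m)B; ∂_{x_0}C + (1/r)∂_r A = (−1)^l(2l−m)D; ∂_{x_0}B − r∂_r D = (2k+m+2)D; ∂_{x_0}D + (1/r)∂_r B = 0. Then ∂_{x_0}(B − C) = 0 and ∂_r(B − C) = 0 on Ξ, so B − C is constant on Ξ; if moreover 2k + m + (−1)^l(2l − m) ≠ 0, then B = C on Ξ. -/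

import Mathlib

noncomputable section

open scoped BigOperators

/-- The `ℓ¹`-norm with respect to a Hamel basis.  On a finite-dimensional real
vector space (such as the Clifford algebra `ℝ_{0,m}`) the induced topology is
the canonical one. -/
def hamelNorm (V : Type) [AddCommGroup V] [Module ℝ V] : AddGroupNorm V where
  toFun v := ∑ i ∈ ((Module.Basis.ofVectorSpace ℝ V).repr v).support,
      |(Module.Basis.ofVectorSpace ℝ V).repr v i|
  map_zero' := by simp
  add_le' := by
    intro x y
    classical
    set b := Module.Basis.ofVectorSpace ℝ V
    have hrepr : b.repr (x + y) = b.repr x + b.repr y := map_add _ _ _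
    calc ∑ i ∈ (b.repr (x + y)).support, |b.repr (x + y) i|
        ≤ ∑ i ∈ (b.repr x).support ∪ (b.repr y).support, |b.repr (x + y) i| := by
          refine Finset.sum_le_sum_of_subset_of_nonneg ?_ (fun i _ _ => abs_nonneg _)
          rw [hrepr]; exact Finsupp.support_add
      _ ≤ ∑ i ∈ (b.repr x).support ∪ (b.repr y).support, (|b.repr x i| + |b.repr y i|) := by
          refine Finset.sum_le_sum fun i _ => ?_
          rw [hrepr, Finsupp.add_apply]; exact abs_add_le _ _
      _ = (∑ i ∈ (b.repr x).support ∪ (b.repr y).support, |b.repr x i|)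
            + ∑ i ∈ (b.repr x).support ∪ (b.repr y).support, |b.repr y i| :=
          Finset.sum_add_distrib
      _ = (∑ i ∈ (b.repr x).support, |b.repr x i|)
            + ∑ i ∈ (b.repr y).support, |b.repr y i| := by
          rw [← Finset.sum_subset Finset.subset_union_left
              (fun i _ hi => by simp [Finsupp.notMem_support_iff.mp hi]),
            ← Finset.sum_subset Finset.subset_union_right
              (fun i _ hi => by simp [Finsupp.notMem_support_iff.mp hi])]
  neg' := by
    intro x
    simp [map_neg]
  eq_zero_of_map_eq_zero' := by
    classical
    intro x hx
    set b := Module.Basis.ofVectorSpace ℝ V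
    have h0 : b.repr x = 0 := by
      ext i
      by_cases hi : i ∈ (b.repr x).support
      · exact abs_eq_zero.mp
          ((Finset.sum_eq_zero_iff_of_nonneg (fun i _ => abs_nonneg _)).mp hx i hi)
      · simpa using Finsupp.notMem_support_iff.mp hi
    exact b.repr.map_eq_zero_iff.mp h0

/-- The quadratic form `Q(v) = -‖v‖²` on `ℝ^m`. -/
def Qneg (m : ℕ) : QuadraticForm ℝ (EuclideanSpace ℝ (Fin m)) :=
  (QuadraticMap.weightedSumSquares ℝ fun _ : Fin m => (-1 : ℝ)).comp
    (WithLp.linearEquiv 2 ℝ (Fin m → ℝ)).toLinearMap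

/-- The real Clifford algebra `ℝ_{0,m}`. -/
abbrev Cl (m : ℕ) := CliffordAlgebra (Qneg m)

/-- The canonical embedding `ι : ℝ^m → ℝ_{0,m}`. -/
abbrev ιC (m : ℕ) : EuclideanSpace ℝ (Fin m) →ₗ[ℝ] Cl m := CliffordAlgebra.ι (Qneg m)

/-- The generators `e₁, …, e_m` of `ℝ_{0,m}`. -/
def eC (m : ℕ) (j : Fin m) : Cl m := ιC m (EuclideanSpace.single j 1)

noncomputable instance (m : ℕ) : NormedAddCommGroup (Cl m) :=
  (hamelNorm (Cl m)).toNormedAddCommGroup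

noncomputable instance (m : ℕ) : NormedSpace ℝ (Cl m) where
  norm_smul_le a v := by
    classical
    have hv : ‖v‖ = ∑ i ∈ ((Module.Basis.ofVectorSpace ℝ (Cl m)).repr v).support,
        |(Module.Basis.ofVectorSpace ℝ (Cl m)).repr v i| := rfl
    have hav : ‖a • v‖ = ∑ i ∈ ((Module.Basis.ofVectorSpace ℝ (Cl m)).repr (a • v)).support,
        |(Module.Basis.ofVectorSpace ℝ (Cl m)).repr (a • v) i| := rfl
    set b := Module.Basis.ofVectorSpace ℝ (Cl m)
    have hrepr : b.repr (a • v) = a • b.repr v := map_smul _ _ _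
    rw [hav, hv, Real.norm_eq_abs]
    calc ∑ i ∈ (b.repr (a • v)).support, |b.repr (a • v) i|
        ≤ ∑ i ∈ (b.repr v).support, |b.repr (a • v) i| := by
          refine Finset.sum_le_sum_of_subset_of_nonneg ?_ (fun i _ _ => abs_nonneg _)
          rw [hrepr]; exact Finsupp.support_smul
      _ = ∑ i ∈ (b.repr v).support, |a| * |b.repr v i| := by
          refine Finset.sum_congr rfl fun i _ => ?_
          rw [hrepr, Finsupp.smul_apply, smul_eq_mul, abs_mul]
      _ = |a| * ∑ i ∈ (b.repr v).support, |b.repr v i| := by rw [Finset.mul_sum]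

/-- The Dirac operator acting from the left: `∂_x f = Σⱼ eⱼ (∂_{xⱼ} f)`. -/
def diracL (m : ℕ) (f : EuclideanSpace ℝ (Fin m) → Cl m) (x : EuclideanSpace ℝ (Fin m)) : Cl m :=
  ∑ j, eC m j * fderiv ℝ f x (EuclideanSpace.single j 1)

/-- The Dirac operator acting from the right: `f ∂_x = Σⱼ (∂_{xⱼ} f) eⱼ`. -/
def diracR (m : ℕ) (f : EuclideanSpace ℝ (Fin m) → Cl m) (x : EuclideanSpace ℝ (Fin m)) : Cl m :=
  ∑ j, fderiv ℝ f x (EuclideanSpace.single j 1) * eC m j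


/-- If `A, B, C, D` satisfy simultaneously the left and right Vekua-type
systems on a connected open `Ξ ⊆ ℝ²₊`, then `∂_{x₀}(B - C) = ∂_r(B - C) = 0`, `B - C` is
constant on `Ξ`, and if `2k + m + (-1)^l(2l - m) ≠ 0` then `B = C` on `Ξ`. -/
theorem B_eq_C (k l m : ℕ) (hm : 1 ≤ m)
    (Ξ : Set (ℝ × ℝ)) (hΞo : IsOpen Ξ) (hΞconn : IsConnected Ξ)
    (hΞ : Ξ ⊆ {p : ℝ × ℝ | 0 < p.2})
    (A B C D : ℝ × ℝ → ℝ) (hA : ContDiffOn ℝ 1 A Ξ) (hB : ContDiffOn ℝ 1 B Ξ)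
    (hC : ContDiffOn ℝ 1 C Ξ) (hD : ContDiffOn ℝ 1 D Ξ)
    (hsysL : ∀ p ∈ Ξ,
      fderiv ℝ A p (1, 0) - p.2 * fderiv ℝ B p (0, 1)
          = (2 * (k : ℝ) + (m : ℝ)) * B p
            + (-1 : ℝ) ^ (l + 1) * (2 * (l : ℝ) - (m : ℝ)) * C p
        ∧ fderiv ℝ B p (1, 0) + (1 / p.2) * fderiv ℝ A p (0, 1)
          = (-1 : ℝ) ^ l * (2 * (l : ℝ) - (m : ℝ)) * D p
        ∧ fderiv ℝ C p (1, 0) - p.2 * fderiv ℝ D p (0, 1)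
          = (2 * (k : ℝ) + (m : ℝ) + 2) * D p
        ∧ fderiv ℝ D p (1, 0) + (1 / p.2) * fderiv ℝ C p (0, 1) = 0)
    (hsysR : ∀ p ∈ Ξ,
      fderiv ℝ A p (1, 0) - p.2 * fderiv ℝ C p (0, 1)
          = (2 * (k : ℝ) + (m : ℝ)) * C p
            + (-1 : ℝ) ^ (l + 1) * (2 * (l : ℝ) - (m : ℝ)) * B p
        ∧ fderiv ℝ C p (1, 0) + (1 / p.2) * fderiv ℝ A p (0, 1)
          = (-1 : ℝ) ^ l * (2 * (l : ℝ) - (m : ℝ)) * D p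
        ∧ fderiv ℝ B p (1, 0) - p.2 * fderiv ℝ D p (0, 1)
          = (2 * (k : ℝ) + (m : ℝ) + 2) * D p
        ∧ fderiv ℝ D p (1, 0) + (1 / p.2) * fderiv ℝ B p (0, 1) = 0) :
    (∀ p ∈ Ξ, fderiv ℝ (fun q => B q - C q) p (1, 0) = 0
        ∧ fderiv ℝ (fun q => B q - C q) p (0, 1) = 0)
      ∧ (∃ c : ℝ, ∀ p ∈ Ξ, B p - C p = c)
      ∧ ((2 * (k : ℝ) + (m : ℝ) + (-1 : ℝ) ^ l * (2 * (l : ℝ) - (m : ℝ)) ≠ 0) →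
          ∀ p ∈ Ξ, B p = C p) := by
  set g : ℝ × ℝ → ℝ := fun q => B q - C q with hg
  have hBd : ∀ p ∈ Ξ, DifferentiableAt ℝ B p := fun p hp =>
    ((hB.differentiableOn one_ne_zero) p hp).differentiableAt (hΞo.mem_nhds hp)
  have hCd : ∀ p ∈ Ξ, DifferentiableAt ℝ C p := fun p hp =>
    ((hC.differentiableOn one_ne_zero) p hp).differentiableAt (hΞo.mem_nhds hp)
  have hgd : ∀ p ∈ Ξ, DifferentiableAt ℝ g p := fun p hp => (hBd p hp).sub (hCd p hp)
  -- key: directional derivatives of g vanish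
  have hkey : ∀ p ∈ Ξ, fderiv ℝ g p (1, 0) = 0 ∧ fderiv ℝ g p (0, 1) = 0 := by
    intro p hp
    have hfd : fderiv ℝ g p = fderiv ℝ B p - fderiv ℝ C p := fderiv_sub (hBd p hp) (hCd p hp)
    obtain ⟨L1, L2, L3, L4⟩ := hsysL p hp
    obtain ⟨R1, R2, R3, R4⟩ := hsysR p hp
    have hr : (0 : ℝ) < p.2 := hΞ hp
    have h10 : fderiv ℝ B p (1, 0) = fderiv ℝ C p (1, 0) := by linarith
    have h01 : fderiv ℝ B p (0, 1) = fderiv ℝ C p (0, 1) := by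
      have hrne : (1 / p.2 : ℝ) ≠ 0 := one_div_ne_zero (ne_of_gt hr)
      have : (1 / p.2) * fderiv ℝ C p (0, 1) = (1 / p.2) * fderiv ℝ B p (0, 1) := by linarith
      have := mul_left_cancel₀ hrne this
      linarith
    constructor
    · rw [hfd]; simp [h10]
    · rw [hfd]; simp [h01]
  have hfd0 : ∀ p ∈ Ξ, fderiv ℝ g p = 0 := by
    intro p hp
    obtain ⟨h1, h2⟩ := hkey p hp
    refine ContinuousLinearMap.ext fun v => ?_
    have hv : (v : ℝ × ℝ) = v.1 • ((1, 0) : ℝ × ℝ) + v.2 • ((0, 1) : ℝ × ℝ) := by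
      ext <;> simp
    rw [ContinuousLinearMap.zero_apply, hv, map_add, map_smul, map_smul, h1, h2]
    simp
  -- local constancy
  have hloc : ∀ p ∈ Ξ, ∀ᶠ q in nhds p, g q = g p := by
    intro p hp
    obtain ⟨ε, hε, hball⟩ := Metric.isOpen_iff.mp hΞo p hp
    have hconst : ∀ q ∈ Metric.ball p ε, g q = g p := by
      intro q hq
      refine (convex_ball p ε).is_const_of_fderivWithin_eq_zero
        (fun z hz => (hgd z (hball hz)).differentiableWithinAt) ?_ hq (Metric.mem_ball_self hε)
      intro z hz
      rw [fderivWithin_of_isOpen Metric.isOpen_ball hz]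
      exact hfd0 z (hball hz)
    exact Filter.eventually_of_mem (Metric.ball_mem_nhds p hε) hconst
  refine ⟨fun p hp => hkey p hp, ?_, ?_⟩
  · -- constancy on the connected set Ξ
    obtain ⟨p₀, hp₀⟩ := hΞconn.nonempty
    refine ⟨g p₀, fun p hp => ?_⟩
    have hlc : IsLocallyConstant (fun q : Ξ => g q) := by
      rw [IsLocallyConstant.iff_eventually_eq]
      intro x
      have := hloc x x.2
      have hcont : ContinuousAt (Subtype.val : Ξ → ℝ × ℝ) x := continuous_subtype_val.continuousAt
      exact hcont this
    have : PreconnectedSpace Ξ := Subtype.preconnectedSpace hΞconn.isPreconnected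
    exact hlc.apply_eq_of_preconnectedSpace ⟨p, hp⟩ ⟨p₀, hp₀⟩
  · -- if λ ≠ 0 then B = C pointwise
    intro hlam p hp
    obtain ⟨L1, L2, L3, L4⟩ := hsysL p hp
    obtain ⟨R1, R2, R3, R4⟩ := hsysR p hp
    have hr : (0 : ℝ) < p.2 := hΞ hp
    have h01 : fderiv ℝ B p (0, 1) = fderiv ℝ C p (0, 1) := by
      have hrne : (1 / p.2 : ℝ) ≠ 0 := one_div_ne_zero (ne_of_gt hr)
      have : (1 / p.2) * fderiv ℝ C p (0, 1) = (1 / p.2) * fderiv ℝ B p (0, 1) := by linarith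
      have := mul_left_cancel₀ hrne this
      linarith
    have hsign : ((-1 : ℝ) ^ (l + 1)) = -((-1 : ℝ) ^ l) := by ring
    have hzero : (2 * (k : ℝ) + (m : ℝ) + (-1 : ℝ) ^ l * (2 * (l : ℝ) - (m : ℝ))) * (B p - C p)
        = 0 := by
      rw [hsign] at L1 R1
      nlinarith [L1, R1, h01]
    have := (mul_eq_zero.mp hzero).resolve_left hlam
    linarith

end
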